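/- Let n ≥ 2, let Ω ⊂ ℝⁿ be a bounded open set whose topological boundary ∂Ω has finite (n−1)-dimensional Hausdorff measure, and let β > 0. Let t > 0 be admissible with witnesses x₁, x₂ in the closure of Ω (i.e. |x₁ − x₂| ≥ 2t and C_{xᵢ,t} ≤ 1/(βt) on ∂Ω), and let v = a₁ C_{x₁,t} + a₂ C_{x₂,t} with (a₁,a₂) ≠ (0,0). Then limsup_{p→∞} of [ ( ∫_Ω |∇v|^p dx + β^p ∫_{∂Ω} |v|^p dH^{n−1} ) / ∫_Ω |v|^p dx ]^{1/p} ≤ 1/t, where ∇v denotes the (almost everywhere defined) derivative of the Lipschitz function v, dx is Lebesgue measure on Ω, and H^{n−1} is the (n−1)-dimensional Hausdorff measure restricted to ∂Ω. -/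

import Mathlib

open Set Metric

/-- The normalized cone of height 1 and base radius `t` centered at `x`. -/
noncomputable def cone {n : ℕ} (x : EuclideanSpace ℝ (Fin n)) (t : ℝ)
    (y : EuclideanSpace ℝ (Fin n)) : ℝ :=
  max (t - ‖y - x‖) 0 / t

/-- `t > 0` is admissible for `Ω` and `β`. -/
def admissible {n : ℕ} (Ω : Set (EuclideanSpace ℝ (Fin n))) (β t : ℝ) : Prop :=
  0 < t ∧ ∃ x₁ ∈ closure Ω, ∃ x₂ ∈ closure Ω, 2 * t ≤ ‖x₁ - x₂‖ ∧
    (∀ y ∈ frontier Ω, cone x₁ t y ≤ 1 / (β * t)) ∧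
    (∀ y ∈ frontier Ω, cone x₂ t y ≤ 1 / (β * t))

/-- `s_β(Ω)`, the supremum of admissible radii. -/
noncomputable def sGeom {n : ℕ} (Ω : Set (EuclideanSpace ℝ (Fin n))) (β : ℝ) : ℝ :=
  sSup {t | admissible Ω β t}

/-- The smallest Lipschitz constant of `w` on the set `s`. -/
noncomputable def lipConst {n : ℕ} (s : Set (EuclideanSpace ℝ (Fin n)))
    (w : EuclideanSpace ℝ (Fin n) → ℝ) : ℝ :=
  sInf {L | 0 ≤ L ∧ ∀ x ∈ s, ∀ y ∈ s, |w x - w y| ≤ L * ‖x - y‖}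


open MeasureTheory

lemma two_max_abs_sub_le (t s d1y d2y d1z d2z : ℝ)
    (h1 : |d1y - d1z| ≤ s) (h2 : |d2y - d2z| ≤ s)
    (hy : 2*t ≤ d1y + d2y) (hz : 2*t ≤ d1z + d2z) :
    |max (t - d1y) 0 - max (t - d1z) 0| + |max (t - d2y) 0 - max (t - d2z) 0| ≤ s := by
  rw [abs_le] at h1 h2
  rcases abs_cases (max (t - d1y) 0 - max (t - d1z) 0) with ⟨g1, _⟩ | ⟨g1, _⟩ <;>
  rcases abs_cases (max (t - d2y) 0 - max (t - d2z) 0) with ⟨g2, _⟩ | ⟨g2, _⟩ <;>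
  rw [g1, g2] <;>
  rcases max_cases (t - d1y) 0 with ⟨e1, f1⟩ | ⟨e1, f1⟩ <;>
  rcases max_cases (t - d1z) 0 with ⟨e2, f2⟩ | ⟨e2, f2⟩ <;>
  rcases max_cases (t - d2y) 0 with ⟨e3, f3⟩ | ⟨e3, f3⟩ <;>
  rcases max_cases (t - d2z) 0 with ⟨e4, f4⟩ | ⟨e4, f4⟩ <;>
  rw [e1, e2, e3, e4] <;>
  linarith

set_option maxHeartbeats 2000000 in
theorem limsup_cone_rayleigh_quotient_le
    {n : ℕ} (hn : 2 ≤ n) (Ω : Set (EuclideanSpace ℝ (Fin n)))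
    (ho : IsOpen Ω) (hb : Bornology.IsBounded Ω)
    (hfr : μH[(n : ℝ) - 1] (frontier Ω) < ⊤)
    (β : ℝ) (hβ : 0 < β)
    (t : ℝ) (ht : 0 < t) (x₁ x₂ : EuclideanSpace ℝ (Fin n))
    (hx₁ : x₁ ∈ closure Ω) (hx₂ : x₂ ∈ closure Ω)
    (hdist : 2 * t ≤ ‖x₁ - x₂‖)
    (hc₁ : ∀ y ∈ frontier Ω, cone x₁ t y ≤ 1 / (β * t))
    (hc₂ : ∀ y ∈ frontier Ω, cone x₂ t y ≤ 1 / (β * t))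
    (a₁ a₂ : ℝ) (ha : (a₁, a₂) ≠ (0, 0))
    (v : EuclideanSpace ℝ (Fin n) → ℝ)
    (hv : v = fun y => a₁ * cone x₁ t y + a₂ * cone x₂ t y) :
    Filter.limsup (fun p : ℝ =>
      (((∫ x in Ω, ‖fderiv ℝ v x‖ ^ p) +
          β ^ p * ∫ y in frontier Ω, |v y| ^ p ∂μH[(n : ℝ) - 1]) /
        ∫ x in Ω, |v x| ^ p) ^ (1 / p)) Filter.atTop ≤ 1 / t := by
  set u := fun p : ℝ =>
      (((∫ x in Ω, ‖fderiv ℝ v x‖ ^ p) +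
          β ^ p * ∫ y in frontier Ω, |v y| ^ p ∂μH[(n : ℝ) - 1]) /
        ∫ x in Ω, |v x| ^ p) ^ (1 / p) with hu
  set M := max |a₁| |a₂| with hM
  have hM0 : 0 < M := by
    rcases eq_or_ne a₁ 0 with h | h
    · have h2 : a₂ ≠ 0 := fun h2 => ha (by rw [h, h2])
      exact lt_max_of_lt_right (abs_pos.2 h2)
    · exact lt_max_of_lt_left (abs_pos.2 h)
  have hddy : ∀ y : EuclideanSpace ℝ (Fin n), 2 * t ≤ ‖y - x₁‖ + ‖y - x₂‖ := by
    intro y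
    calc 2 * t ≤ ‖x₁ - x₂‖ := hdist
    _ = ‖(x₁ - y) + (y - x₂)‖ := by abel_nf
    _ ≤ ‖x₁ - y‖ + ‖y - x₂‖ := norm_add_le _ _
    _ = ‖y - x₁‖ + ‖y - x₂‖ := by rw [norm_sub_rev]
  have hlip : ∀ y z, |v y - v z| ≤ M / t * ‖y - z‖ := by
    intro y z
    have key := two_max_abs_sub_le t ‖y - z‖ ‖y - x₁‖ ‖y - x₂‖ ‖z - x₁‖ ‖z - x₂‖
      (by simpa using abs_norm_sub_norm_le (y - x₁) (z - x₁))
      (by simpa using abs_norm_sub_norm_le (y - x₂) (z - x₂))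
      (hddy y) (hddy z)
    have hvyz : v y - v z =
        (a₁ * (max (t - ‖y - x₁‖) 0 - max (t - ‖z - x₁‖) 0)
          + a₂ * (max (t - ‖y - x₂‖) 0 - max (t - ‖z - x₂‖) 0)) / t := by
      rw [hv]; simp only [cone]; field_simp; ring
    rw [hvyz, abs_div, abs_of_pos ht, div_mul_eq_mul_div]
    gcongr
    calc |a₁ * (max (t - ‖y - x₁‖) 0 - max (t - ‖z - x₁‖) 0)
          + a₂ * (max (t - ‖y - x₂‖) 0 - max (t - ‖z - x₂‖) 0)|
        ≤ |a₁ * (max (t - ‖y - x₁‖) 0 - max (t - ‖z - x₁‖) 0)|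
          + |a₂ * (max (t - ‖y - x₂‖) 0 - max (t - ‖z - x₂‖) 0)| := abs_add_le _ _
      _ = |a₁| * |max (t - ‖y - x₁‖) 0 - max (t - ‖z - x₁‖) 0|
          + |a₂| * |max (t - ‖y - x₂‖) 0 - max (t - ‖z - x₂‖) 0| := by
            rw [abs_mul, abs_mul]
      _ ≤ M * |max (t - ‖y - x₁‖) 0 - max (t - ‖z - x₁‖) 0|
          + M * |max (t - ‖y - x₂‖) 0 - max (t - ‖z - x₂‖) 0| :=
            add_le_add (mul_le_mul_of_nonneg_right (le_max_left _ _) (abs_nonneg _))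
              (mul_le_mul_of_nonneg_right (le_max_right _ _) (abs_nonneg _))
      _ = M * (|max (t - ‖y - x₁‖) 0 - max (t - ‖z - x₁‖) 0|
          + |max (t - ‖y - x₂‖) 0 - max (t - ‖z - x₂‖) 0|) := (mul_add _ _ _).symm
      _ ≤ M * ‖y - z‖ := mul_le_mul_of_nonneg_left key hM0.le
  have hMt0 : 0 ≤ M / t := div_nonneg hM0.le ht.le
  have hfd : ∀ x, ‖fderiv ℝ v x‖ ≤ M / t := by
    intro x
    refine norm_fderiv_le_of_lip' ℝ hMt0 (Filter.Eventually.of_forall fun y => ?_)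
    simpa [Real.norm_eq_abs] using hlip y x
  have hcone_nonneg : ∀ (x : EuclideanSpace ℝ (Fin n)) y, 0 ≤ cone x t y := fun x y =>
    div_nonneg (le_max_right _ _) ht.le
  have hcone_le_one : ∀ (x : EuclideanSpace ℝ (Fin n)) y, cone x t y ≤ 1 := by
    intro x y
    rw [cone, div_le_one ht]
    exact max_le (by linarith [norm_nonneg (y - x)]) ht.le
  have hvabs : ∀ (C : ℝ), 0 ≤ C → ∀ y, cone x₁ t y ≤ C → cone x₂ t y ≤ C → |v y| ≤ M * C := by
    intro C hC y h1 h2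
    rcases le_or_gt t ‖y - x₁‖ with h | h
    · have e1 : cone x₁ t y = 0 := by
        rw [cone, max_eq_right (by linarith), zero_div]
      rw [hv]
      simp only [e1, mul_zero, zero_add]
      rw [abs_mul, abs_of_nonneg (hcone_nonneg x₂ y)]
      exact mul_le_mul (le_max_right _ _) h2 (hcone_nonneg x₂ y) hM0.le
    · have e2 : cone x₂ t y = 0 := by
        rw [cone, max_eq_right (by nlinarith [hddy y]), zero_div]
      rw [hv]
      simp only [e2, mul_zero, add_zero]
      rw [abs_mul, abs_of_nonneg (hcone_nonneg x₁ y)]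
      exact mul_le_mul (le_max_left _ _) h1 (hcone_nonneg x₁ y) hM0.le
  have hβt0 : (0:ℝ) ≤ 1 / (β * t) := by positivity
  have hbdfr : ∀ y ∈ frontier Ω, |v y| ≤ M * (1 / (β * t)) := fun y hy =>
    hvabs _ hβt0 y (hc₁ y hy) (hc₂ y hy)
  have hvM : ∀ y, |v y| ≤ M * 1 := fun y =>
    hvabs 1 zero_le_one y (hcone_le_one x₁ y) (hcone_le_one x₂ y)
  have hvcont : Continuous v := by
    rw [hv]
    have : ∀ x : EuclideanSpace ℝ (Fin n), Continuous (cone x t) := fun x =>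
      (((continuous_const.sub ((continuous_id.sub continuous_const).norm)).max
        continuous_const).div_const t)
    exact ((continuous_const.mul (this x₁)).add (continuous_const.mul (this x₂)))
  obtain ⟨x₀, hx₀, hlow⟩ : ∃ x₀ ∈ closure Ω, ∀ ε : ℝ, 0 < ε → ε < 1 →
      ∀ y, ‖y - x₀‖ < ε * t → M * (1 - ε) ≤ |v y| := by
    rcases le_total |a₂| |a₁| with hc | hc
    · refine ⟨x₁, hx₁, fun ε hε0 hε1 y hy => ?_⟩
      have hd2 : t ≤ ‖y - x₂‖ := by nlinarith [hddy y]
      have e2 : cone x₂ t y = 0 := by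
        rw [cone, max_eq_right (by linarith), zero_div]
      have e1 : cone x₁ t y = (t - ‖y - x₁‖) / t := by
        rw [cone, max_eq_left (by nlinarith)]
      have hMe : M = |a₁| := max_eq_left hc
      rw [hv]
      simp only [e1, e2, mul_zero, add_zero]
      rw [abs_mul, abs_of_nonneg (div_nonneg (by nlinarith) ht.le), ← hMe]
      have : 1 - ε ≤ (t - ‖y - x₁‖) / t := by
        rw [le_div_iff₀ ht]; nlinarith
      exact mul_le_mul_of_nonneg_left this hM0.le
    · refine ⟨x₂, hx₂, fun ε hε0 hε1 y hy => ?_⟩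
      have hd1 : t ≤ ‖y - x₁‖ := by nlinarith [hddy y]
      have e1 : cone x₁ t y = 0 := by
        rw [cone, max_eq_right (by linarith), zero_div]
      have e2 : cone x₂ t y = (t - ‖y - x₂‖) / t := by
        rw [cone, max_eq_left (by nlinarith)]
      have hMe : M = |a₂| := max_eq_right hc
      rw [hv]
      simp only [e1, e2, mul_zero, zero_add]
      rw [abs_mul, abs_of_nonneg (div_nonneg (by nlinarith) ht.le), ← hMe]
      have : 1 - ε ≤ (t - ‖y - x₂‖) / t := by
        rw [le_div_iff₀ ht]; nlinarith
      exact mul_le_mul_of_nonneg_left this hM0.le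
  have volΩ : volume Ω < ⊤ := hb.measure_lt_top
  -- nonnegativity of u
  have hu0 : ∀ p : ℝ, 0 ≤ u p := by
    intro p
    apply Real.rpow_nonneg
    apply div_nonneg
    · refine add_nonneg (setIntegral_nonneg ho.measurableSet fun x _ =>
        Real.rpow_nonneg (norm_nonneg _) p) (mul_nonneg (Real.rpow_nonneg hβ.le p)
        (setIntegral_nonneg isClosed_frontier.measurableSet fun y _ =>
          Real.rpow_nonneg (abs_nonneg _) p))
    · exact setIntegral_nonneg ho.measurableSet fun x _ => Real.rpow_nonneg (abs_nonneg _) p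
  -- key per-ε bound
  have key : ∀ ε : ℝ, 0 < ε → ε < 1 →
      Filter.limsup u Filter.atTop ≤ M / (t * (M * (1 - ε))) := by
    intro ε hε0 hε1
    set c := M * (1 - ε) with hc
    have hc0 : 0 < c := by rw [hc]; nlinarith
    set B := ball x₀ (ε * t) ∩ Ω with hB
    have hBopen : IsOpen B := isOpen_ball.inter ho
    have hBne : B.Nonempty := by
      have := _root_.mem_closure_iff.1 hx₀ (ball x₀ (ε*t)) isOpen_ball
        (mem_ball_self (by positivity))
      exact this
    have hBvol0 : 0 < volume B := hBopen.measure_pos volume hBne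
    have hBfin : volume B < ⊤ := lt_of_le_of_lt (measure_mono inter_subset_right) volΩ
    set m := (volume B).toReal with hm
    have hm0 : 0 < m := ENNReal.toReal_pos hBvol0.ne' hBfin.ne
    set A := (volume Ω).toReal + (μH[(n:ℝ)-1] (frontier Ω)).toReal with hA
    have hmA : m ≤ A := le_add_of_le_of_nonneg
      (ENNReal.toReal_mono volΩ.ne (measure_mono inter_subset_right)) ENNReal.toReal_nonneg
    have hA0 : 0 < A := lt_of_lt_of_le hm0 hmA
    have hev : ∀ p : ℝ, 1 ≤ p → u p ≤ (M / (t * c)) * (A / m) ^ (1/p) := by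
      intro p hp
      have hp0 : 0 < p := lt_of_lt_of_le one_pos hp
      have hN1 : (∫ x in Ω, ‖fderiv ℝ v x‖ ^ p) ≤ (M/t)^p * (volume Ω).toReal := by
        have hmble : AEStronglyMeasurable (fun x => ‖fderiv ℝ v x‖ ^ p)
            (volume.restrict Ω) := by
          apply Measurable.aestronglyMeasurable
          have h1 : Measurable (fun x => ‖fderiv ℝ v x‖) := (measurable_fderiv ℝ v).norm
          exact (Measurable.comp (g := fun y : ℝ => y ^ p) (by fun_prop) h1)
        have := norm_setIntegral_le_of_norm_le_const (f := fun x => ‖fderiv ℝ v x‖ ^ p) (C := (M/t)^p) volΩ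
          (fun x _ => by
            rw [Real.norm_eq_abs, abs_of_nonneg (Real.rpow_nonneg (norm_nonneg _) p)]
            exact Real.rpow_le_rpow (norm_nonneg _) (hfd x) hp0.le)
        exact (le_abs_self _).trans (by rwa [← Real.norm_eq_abs])
      have hN2 : (∫ y in frontier Ω, |v y| ^ p ∂μH[(n:ℝ)-1])
          ≤ (M * (1/(β*t)))^p * (μH[(n:ℝ)-1] (frontier Ω)).toReal := by
        have hmble : AEStronglyMeasurable (fun y => |v y| ^ p)
            ((μH[(n:ℝ)-1]).restrict (frontier Ω)) :=
          ((hvcont.abs.rpow_const (fun x => Or.inr hp0.le))).aestronglyMeasurable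
        have := norm_setIntegral_le_of_norm_le_const (C := (M * (1/(β*t)))^p) hfr
          (fun y hy => by
            rw [Real.norm_eq_abs, abs_of_nonneg (Real.rpow_nonneg (abs_nonneg _) p)]
            exact Real.rpow_le_rpow (abs_nonneg _) (hbdfr y hy) hp0.le)
        exact (le_abs_self _).trans (by rwa [← Real.norm_eq_abs])
      have hβM : β^p * (M * (1/(β*t)))^p = (M/t)^p := by
        rw [← Real.mul_rpow hβ.le (by positivity)]
        congr 1
        field_simp
      have hnum : (∫ x in Ω, ‖fderiv ℝ v x‖ ^ p)
          + β^p * (∫ y in frontier Ω, |v y| ^ p ∂μH[(n:ℝ)-1]) ≤ (M/t)^p * A := by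
        rw [hA, mul_add]
        refine add_le_add hN1 ?_
        calc β^p * (∫ y in frontier Ω, |v y| ^ p ∂μH[(n:ℝ)-1])
            ≤ β^p * ((M * (1/(β*t)))^p * (μH[(n:ℝ)-1] (frontier Ω)).toReal) :=
              mul_le_mul_of_nonneg_left hN2 (Real.rpow_nonneg hβ.le p)
          _ = (M/t)^p * (μH[(n:ℝ)-1] (frontier Ω)).toReal := by rw [← mul_assoc, hβM]
      have hvint : IntegrableOn (fun x => |v x| ^ p) Ω volume := by
        refine Measure.integrableOn_of_bounded (M := (M*1)^p) volΩ.ne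
          ((hvcont.abs.rpow_const (fun x => Or.inr hp0.le)).aestronglyMeasurable) ?_
        refine ae_of_all _ fun y => ?_
        rw [Real.norm_eq_abs, abs_of_nonneg (Real.rpow_nonneg (abs_nonneg _) p)]
        exact Real.rpow_le_rpow (abs_nonneg _) (hvM y) hp0.le
      have hden : c^p * m ≤ ∫ x in Ω, |v x| ^ p := by
        have h1 : c^p * m ≤ ∫ x in B, |v x| ^ p := by
          refine setIntegral_ge_of_const_le_real hBopen.measurableSet hBfin.ne
            (fun y hy => ?_) (hvint.mono_set inter_subset_right)
          have hyb : ‖y - x₀‖ < ε * t := by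
            have := hy.1; rwa [mem_ball, dist_eq_norm] at this
          exact Real.rpow_le_rpow hc0.le (hlow ε hε0 hε1 y hyb) hp0.le
        have h2 : (∫ x in B, |v x| ^ p) ≤ ∫ x in Ω, |v x| ^ p :=
          setIntegral_mono_set hvint
            (Filter.Eventually.of_forall fun y => Real.rpow_nonneg (abs_nonneg _) p)
            (HasSubset.Subset.eventuallyLE inter_subset_right)
        linarith
      have hcm : (0:ℝ) < c^p * m := by positivity
      have hD0 : (0:ℝ) < ∫ x in Ω, |v x| ^ p := lt_of_lt_of_le hcm hden
      have hnum0 : (0:ℝ) ≤ (∫ x in Ω, ‖fderiv ℝ v x‖ ^ p)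
          + β^p * (∫ y in frontier Ω, |v y| ^ p ∂μH[(n:ℝ)-1]) :=
        add_nonneg (setIntegral_nonneg ho.measurableSet fun x _ =>
          Real.rpow_nonneg (norm_nonneg _) p) (mul_nonneg (Real.rpow_nonneg hβ.le p)
          (setIntegral_nonneg isClosed_frontier.measurableSet fun y _ =>
            Real.rpow_nonneg (abs_nonneg _) p))
      have hQ : ((∫ x in Ω, ‖fderiv ℝ v x‖ ^ p)
          + β^p * (∫ y in frontier Ω, |v y| ^ p ∂μH[(n:ℝ)-1])) / (∫ x in Ω, |v x| ^ p)
          ≤ ((M/t)^p * A) / (c^p * m) :=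
        div_le_div₀ (by positivity) hnum hcm hden
      have hrw : ((M/t)^p * A) / (c^p * m) = (M/(t*c))^p * (A/m) := by
        rw [show M/(t*c) = (M/t)/c by rw [div_div], Real.div_rpow (by positivity) hc0.le]
        ring
      have h1 : u p ≤ ((M/(t*c))^p * (A/m))^(1/p) := by
        rw [hu]
        exact Real.rpow_le_rpow (div_nonneg hnum0 hD0.le) (hQ.trans_eq hrw) (by positivity)
      have h2 : ((M/(t*c))^p * (A/m))^(1/p) = (M/(t*c)) * (A/m)^(1/p) := by
        rw [Real.mul_rpow (Real.rpow_nonneg (by positivity) p) (by positivity),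
          ← Real.rpow_mul (by positivity : (0:ℝ) ≤ M/(t*c)), mul_one_div, div_self hp0.ne',
          Real.rpow_one]
      exact h1.trans_eq h2
    have hg : Filter.Tendsto (fun p : ℝ => (M/(t*c)) * (A/m)^(1/p)) Filter.atTop
        (nhds (M/(t*c))) := by
      have h1 : Filter.Tendsto (fun p : ℝ => 1/p) Filter.atTop (nhds 0) := by
        simpa [one_div] using tendsto_inv_atTop_zero
      have h2 : Filter.Tendsto (fun p : ℝ => (A/m)^(1/p)) Filter.atTop (nhds 1) := by
        have hAm : (A/m) ≠ 0 := by positivity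
        have hcont := (Real.continuousAt_const_rpow (a := A/m) (b := 0) hAm)
        have := hcont.tendsto.comp h1
        simpa [Real.rpow_zero, Function.comp_def] using this
      simpa using tendsto_const_nhds.mul h2
    calc Filter.limsup u Filter.atTop
        ≤ Filter.limsup (fun p : ℝ => (M/(t*c)) * (A/m)^(1/p)) Filter.atTop := by
          refine Filter.limsup_le_limsup (Filter.eventually_atTop.2 ⟨1, hev⟩) ?_ ?_
          · exact (Filter.isBoundedUnder_of
              (⟨0, fun p => hu0 p⟩ : ∃ b, ∀ p, u p ≥ b)).isCoboundedUnder_le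
          · exact hg.isBoundedUnder_le
      _ = M/(t*c) := hg.limsup_eq
  -- conclude
  refine le_of_forall_pos_le_add fun δ hδ => ?_
  have hd0 : (0:ℝ) < 1 + t*δ := by positivity
  have hε0 : 0 < t*δ/(1+t*δ) := by positivity
  have hε1 : t*δ/(1+t*δ) < 1 := by rw [div_lt_one hd0]; nlinarith
  have h := key _ hε0 hε1
  have heq : M / (t * (M * (1 - t*δ/(1+t*δ)))) = 1/t + δ := by
    rw [show (1:ℝ) - t*δ/(1+t*δ) = 1/(1+t*δ) by field_simp; ring]
    field_simp
  rwa [heq] at h
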